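/- Let Φ : M_n(ℂ) → M_m(ℂ) be a positive linear map. Suppose there is a family of vectors x_i ∈ ℂⁿ and y_i ∈ ℂᵐ such that ⟨y_i, Φ(conj(x_i)·conj(x_i)†) y_i⟩ = 0 for every i, and the product vectors x_i ⊗ y_i span all of ℂⁿ ⊗ ℂᵐ. Then Φ is optimal. -/

import Mathlib

open Matrix BigOperators
open scoped ComplexOrder

/-- A linear map between matrix algebras is positive if it maps positive semidefinite
matrices to positive semidefinite matrices. -/
def IsPositiveMap {n m : ℕ}
    (Φ : Matrix (Fin n) (Fin n) ℂ →ₗ[ℂ] Matrix (Fin m) (Fin m) ℂ) : Prop :=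
  ∀ X : Matrix (Fin n) (Fin n) ℂ, X.PosSemidef → (Φ X).PosSemidef

/-- The Choi matrix `∑ i j, E_{ij} ⊗ Ψ(E_{ij})` of a linear map between matrix algebras. -/
def ChoiMatrix {n m : ℕ}
    (Ψ : Matrix (Fin n) (Fin n) ℂ →ₗ[ℂ] Matrix (Fin m) (Fin m) ℂ) :
    Matrix (Fin n × Fin m) (Fin n × Fin m) ℂ :=
  Matrix.of fun p q => Ψ (Matrix.single p.1 q.1 1) p.2 q.2

/-- A linear map between matrix algebras is completely positive if its Choi matrix is
positive semidefinite. -/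
def IsCompletelyPositive {n m : ℕ}
    (Ψ : Matrix (Fin n) (Fin n) ℂ →ₗ[ℂ] Matrix (Fin m) (Fin m) ℂ) : Prop :=
  (ChoiMatrix Ψ).PosSemidef

/-- A positive map `Φ` is optimal if for every completely positive map `Ψ` such that
`Φ - Ψ` is positive, one has `Ψ = 0`. -/
def IsOptimal {n m : ℕ}
    (Φ : Matrix (Fin n) (Fin n) ℂ →ₗ[ℂ] Matrix (Fin m) (Fin m) ℂ) : Prop :=
  ∀ Ψ : Matrix (Fin n) (Fin n) ℂ →ₗ[ℂ] Matrix (Fin m) (Fin m) ℂ,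
    IsCompletelyPositive Ψ → IsPositiveMap (Φ - Ψ) → Ψ = 0


/-- `vecMulVec (star x) x` is positive semidefinite. -/
lemma posSemidef_vecMulVec_star_self {n : ℕ} (x : Fin n → ℂ) :
    (vecMulVec (star x) x).PosSemidef := by
  rw [posSemidef_iff_dotProduct_mulVec]
  constructor
  · ext a b
    simp [conjTranspose_apply, vecMulVec_apply, mul_comm]
  · intro z
    have h : star z ⬝ᵥ (vecMulVec (star x) x *ᵥ z) = star (x ⬝ᵥ z) * (x ⬝ᵥ z) := by
      simp only [dotProduct, mulVec, vecMulVec_apply, Pi.star_apply, star_sum, star_mul',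
        Finset.mul_sum, Finset.sum_mul, RCLike.star_def]
      rw [Finset.sum_comm]
      exact Finset.sum_congr rfl fun a _ => Finset.sum_congr rfl fun b _ => by ring
    rw [h]
    exact star_mul_self_nonneg _

lemma linMap_apply_eq_sum_stdBasis {n m : ℕ}
    (Ψ : Matrix (Fin n) (Fin n) ℂ →ₗ[ℂ] Matrix (Fin m) (Fin m) ℂ)
    (M : Matrix (Fin n) (Fin n) ℂ) :
    Ψ M = ∑ a, ∑ b, M a b • Ψ (Matrix.single a b 1) := by
  conv_lhs => rw [matrix_eq_sum_single M]
  rw [map_sum]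
  refine Finset.sum_congr rfl fun a _ => ?_
  rw [map_sum]
  refine Finset.sum_congr rfl fun b _ => ?_
  rw [← _root_.map_smul, smul_single, smul_eq_mul, mul_one]

lemma quadForm_eq_choi_quadForm {n m : ℕ}
    (Ψ : Matrix (Fin n) (Fin n) ℂ →ₗ[ℂ] Matrix (Fin m) (Fin m) ℂ)
    (x : Fin n → ℂ) (y : Fin m → ℂ) :
    star y ⬝ᵥ (Ψ (vecMulVec (star x) x) *ᵥ y)
      = star (fun p : Fin n × Fin m => x p.1 * y p.2) ⬝ᵥ
        (ChoiMatrix Ψ *ᵥ fun p : Fin n × Fin m => x p.1 * y p.2) := by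
  rw [linMap_apply_eq_sum_stdBasis]
  simp only [dotProduct, mulVec, ChoiMatrix, Matrix.of_apply, Pi.star_apply, star_mul',
    Matrix.sum_apply, vecMulVec_apply, Fintype.sum_prod_type, Finset.mul_sum, Finset.sum_mul,
    Matrix.smul_apply, smul_eq_mul]
  conv_lhs => enter [2, p]; rw [Finset.sum_comm]
  conv_lhs => enter [2, p, 2, a]; rw [Finset.sum_comm]
  conv_lhs => rw [Finset.sum_comm]
  refine Finset.sum_congr rfl fun a _ => Finset.sum_congr rfl fun p _ => ?_
  refine Finset.sum_congr rfl fun b _ => Finset.sum_congr rfl fun q _ => ?_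
  ring

/-- The spanning property implies optimality. -/
theorem optimal_of_spanning {n m : ℕ}
    (Φ : Matrix (Fin n) (Fin n) ℂ →ₗ[ℂ] Matrix (Fin m) (Fin m) ℂ)
    (hΦ : IsPositiveMap Φ) {ι : Type*} (x : ι → Fin n → ℂ) (y : ι → Fin m → ℂ)
    (hzero : ∀ i, star (y i) ⬝ᵥ (Φ (vecMulVec (star (x i)) (x i)) *ᵥ y i) = 0)
    (hspan : Submodule.span ℂ
      (Set.range fun i => fun p : Fin n × Fin m => x i p.1 * y i p.2) = ⊤) :
    IsOptimal Φ := by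
  intro Ψ hΨ hpos
  set C := ChoiMatrix Ψ with hC
  set z : ι → (Fin n × Fin m → ℂ) := fun i => fun p => x i p.1 * y i p.2 with hz
  -- each z i is in the kernel of C
  have hker : ∀ i, C *ᵥ z i = 0 := by
    intro i
    rw [← hΨ.dotProduct_mulVec_zero_iff]
    have hM := _root_.posSemidef_vecMulVec_star_self (x i)
    have h1 : 0 ≤ star (y i) ⬝ᵥ ((Φ - Ψ) (vecMulVec (star (x i)) (x i)) *ᵥ y i) :=
      (hpos _ hM).dotProduct_mulVec_nonneg (y i)
    have h2 : 0 ≤ star (z i) ⬝ᵥ (C *ᵥ z i) := hΨ.dotProduct_mulVec_nonneg (z i)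
    have hsplit : star (y i) ⬝ᵥ ((Φ - Ψ) (vecMulVec (star (x i)) (x i)) *ᵥ y i)
        = star (y i) ⬝ᵥ (Φ (vecMulVec (star (x i)) (x i)) *ᵥ y i)
          - star (z i) ⬝ᵥ (C *ᵥ z i) := by
      rw [← quadForm_eq_choi_quadForm]
      simp [sub_mulVec, dotProduct_sub]
    rw [hsplit, hzero i] at h1
    have : star (z i) ⬝ᵥ (C *ᵥ z i) = 0 := le_antisymm (by simpa [sub_nonneg] using h1) h2
    exact this
  -- hence C = 0 by the spanning hypothesis
  have hCzero : C = 0 := by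
    have hle : Submodule.span ℂ (Set.range z) ≤ LinearMap.ker C.mulVecLin := by
      rw [Submodule.span_le]
      rintro _ ⟨i, rfl⟩
      exact hker i
    have hall : ∀ v : Fin n × Fin m → ℂ, C *ᵥ v = 0 := by
      intro v
      have : v ∈ LinearMap.ker C.mulVecLin := hle (hspan ▸ Submodule.mem_top)
      exact this
    ext p q
    have := congrFun (hall (Pi.single q 1)) p
    simpa [mulVec_single] using this
  -- hence Ψ = 0
  ext M : 1
  rw [linMap_apply_eq_sum_stdBasis]
  have hE : ∀ a b, Ψ (Matrix.single a b 1) = 0 := by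
    intro a b
    ext p q
    have := congrFun (congrFun hCzero (a, p)) (b, q)
    simpa [hC, ChoiMatrix] using this
  simp [hE]
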